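/- Let σ_1, …, σ_k be a normalized rank-1 POVM on ℂ^d and let U be a unitary d×d complex matrix. For n ≥ 1 define H_n := Σ_{(i_1,…,i_n) ∈ {1,…,k}^n} η( (1/k)·∏_{m=1}^{n−1} (d/k)·Re tr(U σ_{i_m} U* σ_{i_{m+1}}) ). Then the sequence H_n/n converges and lim_{n→∞} H_n/n = (1/k)·Σ_{i=1}^k Σ_{j=1}^k η((d/k)·Re tr(U σ_i U* σ_j)); i.e., the quantum dynamical entropy of U with respect to the POVM exists and is given by this formula. -/

import Mathlib

open Finset Real Filter Matrix

private lemma qde_sumB {k : ℕ} (p : Fin k → Fin k → ℝ) (hrow : ∀ i, ∑ j, p i j = 1) :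
    ∀ (n : ℕ) (g : Fin k → ℝ),
      (∑ i : Fin (n+1) → Fin k,
        (∏ m : Fin n, p (i m.castSucc) (i m.succ)) * g (i 0)) = ∑ b, g b := by
  intro n
  induction n with
  | zero =>
      intro g
      simpa using Fintype.sum_equiv (Equiv.funUnique (Fin 1) (Fin k)) _ g (fun i => rfl)
  | succ n ih =>
      intro g
      rw [← (Fin.consEquiv (fun _ : Fin (n+2) => Fin k)).sum_comp, Fintype.sum_prod_type]
      have key : ∀ (a : Fin k) (i : Fin (n+1) → Fin k),
          (∏ m : Fin (n+1), p ((Fin.cons a i : Fin (n+2) → Fin k) m.castSucc)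
              ((Fin.cons a i : Fin (n+2) → Fin k) m.succ)) * g ((Fin.cons a i : Fin (n+2) → Fin k) 0)
            = (∏ m : Fin n, p (i m.castSucc) (i m.succ)) * (p a (i 0) * g a) := by
        intro a i
        rw [Fin.prod_univ_succ]
        simp only [← Fin.succ_castSucc, Fin.cons_succ, Fin.cons_zero, Fin.castSucc_zero]
        ring
      calc ∑ a : Fin k, ∑ i : Fin (n+1) → Fin k,
              (∏ m : Fin (n+1), p ((Fin.consEquiv fun _ => Fin k) (a, i) m.castSucc)
                ((Fin.consEquiv fun _ => Fin k) (a, i) m.succ)) *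
                g ((Fin.consEquiv fun _ => Fin k) (a, i) 0)
          = ∑ a : Fin k, ∑ i : Fin (n+1) → Fin k,
              (∏ m : Fin n, p (i m.castSucc) (i m.succ)) * (p a (i 0) * g a) := by
            exact Finset.sum_congr rfl fun a _ => Finset.sum_congr rfl fun i _ => key a i
        _ = ∑ a : Fin k, ∑ b : Fin k, p a b * g a := by
            exact Finset.sum_congr rfl fun a _ => ih (fun b => p a b * g a)
        _ = ∑ a, g a := by
            refine Finset.sum_congr rfl fun a _ => ?_
            rw [← Finset.sum_mul, hrow, one_mul]

private lemma qde_S {k : ℕ} (hk : 0 < k) (p : Fin k → Fin k → ℝ)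
    (hrow : ∀ i, ∑ j, p i j = 1) (hcol : ∀ j, ∑ i, p i j = 1) :
    ∀ n : ℕ, (∑ i : Fin (n+1) → Fin k,
        Real.negMulLog ((1/(k:ℝ)) * ∏ m : Fin n, p (i m.castSucc) (i m.succ)))
      = Real.log k + n * ((1/(k:ℝ)) * ∑ a, ∑ b, Real.negMulLog (p a b)) := by
  have hk0 : (k:ℝ) ≠ 0 := Nat.cast_ne_zero.mpr hk.ne'
  intro n
  induction n with
  | zero =>
      simp only [Fin.prod_univ_zero, mul_one, Finset.sum_const, Nat.cast_zero, zero_mul, add_zero]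
      rw [Finset.card_univ]
      simp only [Fintype.card_fun, Fintype.card_fin, pow_one]
      rw [nsmul_eq_mul]
      rw [show Real.negMulLog (1/(k:ℝ)) = (1/(k:ℝ)) * Real.log k by
        rw [Real.negMulLog, one_div, Real.log_inv]; ring]
      field_simp
      simp
  | succ n ih =>
      rw [← (Fin.consEquiv (fun _ : Fin (n+2) => Fin k)).sum_comp, Fintype.sum_prod_type]
      have key : ∀ (a : Fin k) (i : Fin (n+1) → Fin k),
          Real.negMulLog ((1/(k:ℝ)) * ∏ m : Fin (n+1),
              p ((Fin.cons a i : Fin (n+2) → Fin k) m.castSucc)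
                ((Fin.cons a i : Fin (n+2) → Fin k) m.succ))
            = (∏ m : Fin n, p (i m.castSucc) (i m.succ)) * ((1/(k:ℝ)) * Real.negMulLog (p a (i 0)))
              + p a (i 0) * Real.negMulLog ((1/(k:ℝ)) * ∏ m : Fin n, p (i m.castSucc) (i m.succ)) := by
        intro a i
        rw [Fin.prod_univ_succ]
        simp only [← Fin.succ_castSucc, Fin.cons_succ, Fin.cons_zero, Fin.castSucc_zero]
        rw [show (1/(k:ℝ)) * (p a (i 0) * ∏ m : Fin n, p (i m.castSucc) (i m.succ))
            = p a (i 0) * ((1/(k:ℝ)) * ∏ m : Fin n, p (i m.castSucc) (i m.succ)) by ring]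
        rw [Real.negMulLog_mul]
        ring
      calc ∑ a : Fin k, ∑ i : Fin (n+1) → Fin k,
              Real.negMulLog ((1/(k:ℝ)) * ∏ m : Fin (n+1),
                p ((Fin.consEquiv fun _ => Fin k) (a, i) m.castSucc)
                  ((Fin.consEquiv fun _ => Fin k) (a, i) m.succ))
          = ∑ a : Fin k, ∑ i : Fin (n+1) → Fin k,
              ((∏ m : Fin n, p (i m.castSucc) (i m.succ)) * ((1/(k:ℝ)) * Real.negMulLog (p a (i 0)))
                + p a (i 0) * Real.negMulLog ((1/(k:ℝ)) * ∏ m : Fin n, p (i m.castSucc) (i m.succ))) := by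
            exact Finset.sum_congr rfl fun a _ => Finset.sum_congr rfl fun i _ => key a i
        _ = (∑ a : Fin k, ∑ i : Fin (n+1) → Fin k,
              (∏ m : Fin n, p (i m.castSucc) (i m.succ)) * ((1/(k:ℝ)) * Real.negMulLog (p a (i 0))))
            + ∑ i : Fin (n+1) → Fin k, (∑ a : Fin k, p a (i 0)) *
                Real.negMulLog ((1/(k:ℝ)) * ∏ m : Fin n, p (i m.castSucc) (i m.succ)) := by
            simp only [Finset.sum_add_distrib]
            congr 1
            rw [Finset.sum_comm]
            refine Finset.sum_congr rfl fun i _ => ?_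
            rw [Finset.sum_mul]
        _ = Real.log k + (↑(n+1)) * ((1/(k:ℝ)) * ∑ a, ∑ b, Real.negMulLog (p a b)) := by
            have h1 : ∀ a : Fin k, ∑ i : Fin (n+1) → Fin k,
                (∏ m : Fin n, p (i m.castSucc) (i m.succ)) * ((1/(k:ℝ)) * Real.negMulLog (p a (i 0)))
                  = ∑ b, (1/(k:ℝ)) * Real.negMulLog (p a b) :=
              fun a => qde_sumB p hrow n (fun b => (1/(k:ℝ)) * Real.negMulLog (p a b))
            rw [Finset.sum_congr rfl fun a _ => h1 a]
            have h2 : ∀ i : Fin (n+1) → Fin k, (∑ a : Fin k, p a (i 0)) *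
                Real.negMulLog ((1/(k:ℝ)) * ∏ m : Fin n, p (i m.castSucc) (i m.succ))
                  = Real.negMulLog ((1/(k:ℝ)) * ∏ m : Fin n, p (i m.castSucc) (i m.succ)) := by
              intro i; rw [hcol, one_mul]
            rw [Finset.sum_congr rfl fun i _ => h2 i, ih]
            simp only [← Finset.mul_sum]
            push_cast
            ring

/-- The quantum dynamical entropy of a unitary `U` with respect to a normalized rank-1
POVM exists: with `H_{n+1} = Σ_{strings i of length n+1} η((1/k)·∏_m (d/k)·tr(Uσ_{i_m}U*σ_{i_{m+1}}))`,
the sequence `H_{n+1}/(n+1)` converges to `(1/k)·Σ_{i,j} η((d/k)·tr(Uσ_iU*σ_j))`. -/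
theorem stmt_18 {d k : ℕ} (hd : 0 < d) (hk : 0 < k)
    (σ : Fin k → Matrix (Fin d) (Fin d) ℂ)
    (hherm : ∀ j, (σ j).IsHermitian)
    (hproj : ∀ j, σ j * σ j = σ j)
    (htr : ∀ j, (σ j).trace = 1)
    (hsum : ∑ j, σ j = ((k : ℂ) / (d : ℂ)) • 1)
    (U : Matrix (Fin d) (Fin d) ℂ)
    (hU : U * U.conjTranspose = 1) (hU' : U.conjTranspose * U = 1) :
    Filter.Tendsto
      (fun n : ℕ =>
        (∑ i : Fin (n + 1) → Fin k,
            Real.negMulLog ((1 / (k : ℝ)) *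
              ∏ m : Fin n, ((d : ℝ) / k) *
                ((U * σ (i m.castSucc) * U.conjTranspose * σ (i m.succ)).trace).re))
          / (n + 1 : ℝ))
      Filter.atTop
      (nhds ((1 / (k : ℝ)) * ∑ i, ∑ j,
        Real.negMulLog (((d : ℝ) / k) *
          ((U * σ i * U.conjTranspose * σ j).trace).re))) := by
  have hd0 : (d:ℝ) ≠ 0 := Nat.cast_ne_zero.mpr hd.ne'
  have hk0 : (k:ℝ) ≠ 0 := Nat.cast_ne_zero.mpr hk.ne'
  set p : Fin k → Fin k → ℝ := fun i j => ((d : ℝ) / k) *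
      ((U * σ i * U.conjTranspose * σ j).trace).re with hp
  have hrow : ∀ a, ∑ b, p a b = 1 := by
    intro a
    have h1 : ∑ b, (U * σ a * U.conjTranspose * σ b).trace = (k:ℂ)/d := by
      calc ∑ b, (U * σ a * U.conjTranspose * σ b).trace
          = (∑ b, U * σ a * U.conjTranspose * σ b).trace := (Matrix.trace_sum _ _).symm
        _ = ((U * σ a * U.conjTranspose) * (((k:ℂ)/d) • (1:Matrix (Fin d) (Fin d) ℂ))).trace := by
            rw [← Finset.mul_sum, hsum]
        _ = ((k:ℂ)/d) * (U * σ a * U.conjTranspose).trace := by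
            rw [Matrix.mul_smul, Matrix.mul_one, Matrix.trace_smul, smul_eq_mul]
        _ = ((k:ℂ)/d) * (U.conjTranspose * U * σ a).trace := by
            rw [Matrix.trace_mul_cycle]
        _ = (k:ℂ)/d := by rw [hU', Matrix.one_mul, htr, mul_one]
    have h2 : ∑ b, ((U * σ a * U.conjTranspose * σ b).trace).re = (k:ℝ)/d := by
      rw [← Complex.re_sum, h1]
      rw [show ((k:ℂ)/d) = (((k:ℝ)/d : ℝ) : ℂ) by push_cast; ring]
      exact Complex.ofReal_re _
    simp only [hp, ← Finset.mul_sum, h2]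
    field_simp
  have hcol : ∀ b, ∑ a, p a b = 1 := by
    intro b
    have h1 : ∑ a, (U * σ a * U.conjTranspose * σ b).trace = (k:ℂ)/d := by
      calc ∑ a, (U * σ a * U.conjTranspose * σ b).trace
          = (∑ a, U * σ a * (U.conjTranspose * σ b)).trace := by
            rw [← Matrix.trace_sum]; simp only [Matrix.mul_assoc]
        _ = (U * (((k:ℂ)/d) • (1:Matrix (Fin d) (Fin d) ℂ)) * (U.conjTranspose * σ b)).trace := by
            rw [show ∑ a, U * σ a * (U.conjTranspose * σ b)
                = U * (∑ a, σ a) * (U.conjTranspose * σ b) by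
              simp [Finset.mul_sum, Finset.sum_mul], hsum]
        _ = ((k:ℂ)/d) * (U * 1 * (U.conjTranspose * σ b)).trace := by
            rw [Matrix.mul_smul, Matrix.smul_mul, Matrix.trace_smul, smul_eq_mul]
        _ = ((k:ℂ)/d) * (U * U.conjTranspose * σ b).trace := by
            rw [Matrix.mul_one, Matrix.mul_assoc]
        _ = (k:ℂ)/d := by rw [hU, Matrix.one_mul, htr, mul_one]
    have h2 : ∑ a, ((U * σ a * U.conjTranspose * σ b).trace).re = (k:ℝ)/d := by
      rw [← Complex.re_sum, h1]
      rw [show ((k:ℂ)/d) = (((k:ℝ)/d : ℝ) : ℂ) by push_cast; ring]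
      exact Complex.ofReal_re _
    simp only [hp, ← Finset.mul_sum, h2]
    field_simp
  have hS := qde_S hk p hrow hcol
  set C : ℝ := (1/(k:ℝ)) * ∑ a, ∑ b, Real.negMulLog (p a b) with hC
  have hlim : Filter.Tendsto (fun n : ℕ => (Real.log k + (n:ℝ) * C) / ((n:ℝ) + 1))
      Filter.atTop (nhds C) := by
    have h0 : Filter.Tendsto (fun n : ℕ => 1/((n:ℝ)+1)) Filter.atTop (nhds 0) :=
      tendsto_one_div_add_atTop_nhds_zero_nat
    have h1 : Filter.Tendsto (fun n : ℕ => C + (Real.log k - C) * (1/((n:ℝ)+1)))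
        Filter.atTop (nhds (C + (Real.log k - C) * 0)) :=
      tendsto_const_nhds.add (tendsto_const_nhds.mul h0)
    rw [mul_zero, add_zero] at h1
    refine h1.congr fun n => ?_
    have hn : ((n:ℝ)+1) ≠ 0 := by positivity
    field_simp
    ring
  refine hlim.congr fun n => ?_
  rw [hS n]
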